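/- Let n ≥ 1, m > 0 and 0 < θ ≤ 1. Then there exist δ₀ ∈ (0, δ) and a constant C > 0 depending only on n, δ₀ and θ such that for all t ≥ 1 and all P₁ ∈ ℝ, ∫_{|ξ| ≤ δ₀} t² P₁² e^{-|ξ|² t} ( (√(|ξ|² + m² log(1+|ξ|^{2θ})) − b(ξ)) / b(ξ) )² dξ ≤ C m^{-2} P₁² t^{-(n+4−4θ)/2}. -/

import Mathlib

open MeasureTheory Real

noncomputable section

/-- Euclidean space `ℝⁿ`. -/
abbrev E (n : ℕ) := EuclideanSpace ℝ (Fin n)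

/-- The Fourier transform `û₁(ξ) = ∫ e^{-i x·ξ} u₁(x) dx`. -/
def fourierT (n : ℕ) (u₁ : E n → ℝ) (ξ : E n) : ℂ :=
  ∫ x : E n, Complex.exp (-(Complex.I * ((inner ℝ x ξ : ℝ) : ℂ))) * (u₁ x : ℂ)

/-- `b(r) = (1/2)√(4r² + 4m² log(1+r^{2θ}) − r⁴)` (low frequencies). -/
def bF (m θ r : ℝ) : ℝ :=
  Real.sqrt (4 * r ^ 2 + 4 * m ^ 2 * Real.log (1 + r ^ (2 * θ)) - r ^ 4) / 2

/-- `d(r) = (1/2)√(r⁴ − 4r² − 4m² log(1+r^{2θ}))` (high frequencies). -/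
def dF (m θ r : ℝ) : ℝ :=
  Real.sqrt (r ^ 4 - 4 * r ^ 2 - 4 * m ^ 2 * Real.log (1 + r ^ (2 * θ))) / 2

/-! ### Auxiliary lemmas -/

lemma stmt8_log_lb {x : ℝ} (h0 : 0 ≤ x) (h1 : x ≤ 1) : x / 2 ≤ Real.log (1 + x) := by
  have hx : (0:ℝ) < 1 + x := by linarith
  have h := Real.log_le_sub_one_of_pos (show (0:ℝ) < (1+x)⁻¹ by positivity)
  rw [Real.log_inv] at h
  have h2 : (1+x)⁻¹ * (1+x) = 1 := inv_mul_cancel₀ hx.ne'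
  nlinarith [h, h2]

lemma stmt8_ratio_sq_le (m θ r : ℝ) (hm : 0 < m) (hθ1 : 0 < θ)
    (hr0 : 0 < r) (hr1 : r ≤ 1) :
    ((Real.sqrt (r^2 + m^2 * Real.log (1 + r^(2*θ))) - bF m θ r) / bF m θ r)^2
      ≤ (r^2) ^ ((4:ℝ) - 2*θ) / (4 * m^4) := by
  set L := Real.log (1 + r^(2*θ)) with hLdef
  have hx0 : 0 < r^(2*θ) := Real.rpow_pos_of_pos hr0 _
  have hx1 : r^(2*θ) ≤ 1 := Real.rpow_le_one hr0.le hr1 (by positivity)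
  have hL : r^(2*θ)/2 ≤ L := stmt8_log_lb hx0.le hx1
  have hL0 : 0 < L := lt_of_lt_of_le (by positivity) hL
  have hr2 : r^2 ≤ 1 := by nlinarith
  set A := r^2 + m^2 * L with hAdef
  have hA0 : 0 < A := by positivity
  have hAlb : m^2 * r^(2*θ)/2 ≤ A := by nlinarith
  have hin : (0:ℝ) < 4 * r ^ 2 + 4 * m ^ 2 * L - r ^ 4 := by nlinarith
  have hb0 : 0 < bF m θ r := by
    rw [bF, ← hLdef]; positivity
  have hbsq : (bF m θ r)^2 = A - r^4/4 := by
    rw [bF, ← hLdef, div_pow, Real.sq_sqrt hin.le]; rw [hAdef]; ring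
  have hblb : m^2 * r^(2*θ)/2 ≤ (bF m θ r)^2 := by
    rw [hbsq]; nlinarith
  have hsA : Real.sqrt A ^ 2 = A := Real.sq_sqrt hA0.le
  have hsA0 : 0 ≤ Real.sqrt A := Real.sqrt_nonneg A
  have hsum : 0 < Real.sqrt A + bF m θ r := by positivity
  have hdiff : Real.sqrt A - bF m θ r = (r^4/4) / (Real.sqrt A + bF m θ r) := by
    rw [eq_div_iff hsum.ne']
    linear_combination hsA - hbsq
  have h1 : ((Real.sqrt A - bF m θ r) / bF m θ r)^2
      = (r^4/4)^2 / ((Real.sqrt A + bF m θ r)^2 * (bF m θ r)^2) := by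
    rw [hdiff, div_div, div_pow, mul_pow]
  have hAle : A ≤ (Real.sqrt A + bF m θ r)^2 := by nlinarith
  have hden : (m^2 * r^(2*θ)/2) * (m^2 * r^(2*θ)/2)
      ≤ (Real.sqrt A + bF m θ r)^2 * (bF m θ r)^2 := by
    have := mul_le_mul (hAlb.trans hAle) hblb (by positivity) (by positivity)
    linarith
  have h2 : ((Real.sqrt A - bF m θ r) / bF m θ r)^2
      ≤ (r^4/4)^2 / ((m^2 * r^(2*θ)/2) * (m^2 * r^(2*θ)/2)) := by
    rw [h1]
    exact div_le_div_of_nonneg_left (by positivity) (by positivity) hden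
  have h3 : (r^4/4)^2 / ((m^2 * r^(2*θ)/2) * (m^2 * r^(2*θ)/2))
      = (r^2) ^ ((4:ℝ) - 2*θ) / (4 * m^4) := by
    have e1 : (r^2 : ℝ) ^ ((4:ℝ) - 2*θ) = r^8 / (r^(2*θ))^2 := by
      rw [← Real.rpow_natCast r 2, ← Real.rpow_mul hr0.le]
      rw [show ((2:ℕ):ℝ) * (4 - 2*θ) = (8:ℝ) - (2*θ)*2 by push_cast; ring]
      rw [Real.rpow_sub hr0, Real.rpow_mul hr0.le]
      rw [show (8:ℝ) = ((8:ℕ):ℝ) by norm_num, Real.rpow_natCast,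
        show (2:ℝ) = ((2:ℕ):ℝ) by norm_num, Real.rpow_natCast]
    rw [e1]
    field_simp
    ring
  rw [hAdef] at h2
  exact h2.trans_eq h3

lemma stmt8_rpow_le_exp {x θ : ℝ} (hx : 0 ≤ x) (hθ1 : 0 < θ) (hθ2 : θ ≤ 1) :
    x ^ ((4:ℝ) - 2*θ) ≤ 4096 * Real.exp (x/2) := by
  have he1 : (1:ℝ) ≤ Real.exp (x/2) := Real.one_le_exp (by linarith)
  rcases le_or_gt x 1 with h | h
  · have := Real.rpow_le_one hx h (by linarith : (0:ℝ) ≤ 4 - 2*θ)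
    nlinarith
  · have h1 : x ^ ((4:ℝ) - 2*θ) ≤ x ^ ((4:ℝ)) :=
      Real.rpow_le_rpow_of_exponent_le h.le (by linarith)
    have h2 : x ^ ((4:ℝ)) = x ^ (4:ℕ) := by
      rw [← Real.rpow_natCast x 4]; norm_num
    have h3 : x/8 ≤ Real.exp (x/8) := by
      have := Real.add_one_le_exp (x/8); linarith
    have h4 : (x/8)^(4:ℕ) ≤ (Real.exp (x/8))^(4:ℕ) :=
      pow_le_pow_left₀ (by linarith) h3 4
    have h5 : (Real.exp (x/8))^(4:ℕ) = Real.exp (x/2) := by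
      rw [← Real.exp_nat_mul]; congr 1; push_cast; ring
    calc x ^ ((4:ℝ) - 2*θ) ≤ x ^ (4:ℕ) := h1.trans_eq h2
      _ = 4096 * (x/8)^(4:ℕ) := by ring
      _ ≤ 4096 * Real.exp (x/2) := by rw [← h5]; linarith

lemma stmt8_pointwise (m θ t r P₁ : ℝ) (hm : 0 < m) (hθ1 : 0 < θ) (hθ2 : θ ≤ 1)
    (ht : 1 ≤ t) (hr0 : 0 ≤ r) (hr1 : r ≤ 1) :
    t ^ 2 * P₁ ^ 2 * Real.exp (-(r ^ 2) * t) *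
        ((Real.sqrt (r ^ 2 + m ^ 2 * Real.log (1 + r ^ (2 * θ))) - bF m θ r) /
          bF m θ r) ^ 2
      ≤ 1024 * (m^4)⁻¹ * P₁^2 * t ^ (2*θ - 2 : ℝ) * Real.exp (-(r^2*t)/2) := by
  have ht0 : (0:ℝ) < t := lt_of_lt_of_le one_pos ht
  rcases eq_or_lt_of_le hr0 with h0 | h0
  · rw [← h0]
    simp [bF, Real.zero_rpow (show 2*θ ≠ 0 by positivity)]
    positivity
  · have key := stmt8_ratio_sq_le m θ r hm hθ1 h0 hr1
    have hexp := stmt8_rpow_le_exp (x := r^2*t) (by positivity) hθ1 hθ2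
    have e1 : (r^2:ℝ) ^ ((4:ℝ) - 2*θ) = (r^2*t) ^ ((4:ℝ)-2*θ) / t ^ ((4:ℝ)-2*θ) := by
      rw [← Real.div_rpow (by positivity) ht0.le]
      congr 1
      field_simp
    have e2 : t^2 / t ^ ((4:ℝ)-2*θ) = t ^ (2*θ - 2 : ℝ) := by
      rw [← Real.rpow_natCast t 2, ← Real.rpow_sub ht0]
      congr 1; push_cast; ring
    have e3 : Real.exp (-(r^2)*t) * Real.exp ((r^2*t)/2) = Real.exp (-(r^2*t)/2) := by
      rw [← Real.exp_add]; congr 1; ring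
    calc t ^ 2 * P₁ ^ 2 * Real.exp (-(r ^ 2) * t) *
        ((Real.sqrt (r ^ 2 + m ^ 2 * Real.log (1 + r ^ (2 * θ))) - bF m θ r) /
          bF m θ r) ^ 2
        ≤ t ^ 2 * P₁ ^ 2 * Real.exp (-(r ^ 2) * t) *
            ((r^2) ^ ((4:ℝ) - 2*θ) / (4 * m^4)) :=
          mul_le_mul_of_nonneg_left key (by positivity)
      _ = (P₁^2 * (m^4)⁻¹ / 4) * ((r^2*t) ^ ((4:ℝ)-2*θ)) *
            (Real.exp (-(r^2)*t) * (t^2 / t ^ ((4:ℝ)-2*θ))) := by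
          rw [e1]; ring
      _ ≤ (P₁^2 * (m^4)⁻¹ / 4) * (4096 * Real.exp ((r^2*t)/2)) *
            (Real.exp (-(r^2)*t) * (t^2 / t ^ ((4:ℝ)-2*θ))) := by
          apply mul_le_mul_of_nonneg_right
            (mul_le_mul_of_nonneg_left hexp (by positivity)) (by positivity)
      _ = 1024 * (m^4)⁻¹ * P₁^2 * (t^2 / t ^ ((4:ℝ)-2*θ)) *
            (Real.exp (-(r^2)*t) * Real.exp ((r^2*t)/2)) := by ring
      _ = 1024 * (m^4)⁻¹ * P₁^2 * t ^ (2*θ - 2 : ℝ) * Real.exp (-(r^2*t)/2) := by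
          rw [e2, e3]

/-- the `F₂`-estimate on the low frequency zone. -/
theorem stmt8 (n : ℕ) (hn : 1 ≤ n) (m θ : ℝ) (hm : 0 < m) (hθ1 : 0 < θ) (hθ2 : θ ≤ 1)
    (δ : ℝ) (hδ2 : 2 < δ)
    (hδneg : ∀ r : ℝ, 0 < r → r < δ →
      r ^ 4 - 4 * r ^ 2 - 4 * m ^ 2 * Real.log (1 + r ^ (2 * θ)) < 0)
    (hδpos : ∀ r : ℝ, δ ≤ r →
      0 ≤ r ^ 4 - 4 * r ^ 2 - 4 * m ^ 2 * Real.log (1 + r ^ (2 * θ))) :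
    ∃ δ₀ : ℝ, 0 < δ₀ ∧ δ₀ < δ ∧ ∃ C : ℝ, 0 < C ∧
      ∀ t : ℝ, 1 ≤ t → ∀ P₁ : ℝ,
        (∫ ξ in {ξ : E n | ‖ξ‖ ≤ δ₀},
            t ^ 2 * P₁ ^ 2 * Real.exp (-(‖ξ‖ ^ 2) * t) *
              ((Real.sqrt (‖ξ‖ ^ 2 + m ^ 2 * Real.log (1 + ‖ξ‖ ^ (2 * θ))) - bF m θ ‖ξ‖) /
                bF m θ ‖ξ‖) ^ 2) ≤
          C * m⁻¹ ^ 2 * P₁ ^ 2 * t ^ (-((n : ℝ) + 4 - 4 * θ) / 2) := by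
  refine ⟨1, one_pos, by linarith, 1024 * (2*π) ^ ((n:ℝ)/2) * m⁻¹^2, by positivity, ?_⟩
  intro t ht P₁
  have ht0 : (0:ℝ) < t := lt_of_lt_of_le one_pos ht
  have ht2 : (0:ℝ) < t/2 := by linarith
  set S : Set (E n) := {ξ : E n | ‖ξ‖ ≤ (1:ℝ)} with hS
  have hSmeas : MeasurableSet S :=
    (isClosed_le continuous_norm continuous_const).measurableSet
  set G : E n → ℝ := fun ξ => Real.exp (-(t/2) * ‖ξ‖^2) with hG
  have hgint : Integrable G := by
    have h := (GaussianFourier.integrable_cexp_neg_mul_sq_norm_add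
      (V := E n) (b := ((t/2 : ℝ) : ℂ)) (by simpa using ht2) 0 (0 : E n)).norm
    refine h.congr (Filter.Eventually.of_forall fun ξ => ?_)
    show ‖Complex.exp _‖ = _
    rw [Complex.norm_exp]
    congr 1
    simp [← Complex.ofReal_pow]
  have hgval : ∫ ξ : E n, G ξ = (π/(t/2)) ^ ((n:ℝ)/2) := by
    rw [hG, GaussianFourier.integral_rexp_neg_mul_sq_norm ht2]
    norm_num [finrank_euclideanSpace_fin]
  set K : ℝ := 1024 * (m^4)⁻¹ * P₁^2 * t ^ (2*θ-2:ℝ) with hK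
  set F : E n → ℝ := fun ξ =>
    t ^ 2 * P₁ ^ 2 * Real.exp (-(‖ξ‖ ^ 2) * t) *
      ((Real.sqrt (‖ξ‖ ^ 2 + m ^ 2 * Real.log (1 + ‖ξ‖ ^ (2 * θ))) - bF m θ ‖ξ‖) /
        bF m θ ‖ξ‖) ^ 2 with hF
  have hFnn : ∀ ξ, 0 ≤ F ξ := fun ξ => by rw [hF]; positivity
  have hpt : ∀ ξ ∈ S, F ξ ≤ K * G ξ := by
    intro ξ hξ
    have h := stmt8_pointwise m θ t ‖ξ‖ P₁ hm hθ1 hθ2 ht (norm_nonneg ξ) hξ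
    refine h.trans_eq ?_
    rw [hK, hG]
    rw [show -(‖ξ‖^2*t)/2 = -(t/2)*‖ξ‖^2 by ring]
  have hFmeas : Measurable F := by
    have h1 : Measurable fun ξ : E n => ‖ξ‖ ^ (2*θ) :=
      (continuous_norm.rpow_const (fun x => Or.inr (by positivity))).measurable
    have h2 : Measurable fun ξ : E n => Real.log (1 + ‖ξ‖ ^ (2*θ)) :=
      Real.measurable_log.comp (measurable_const.add h1)
    have h3 : Measurable fun ξ : E n => bF m θ ‖ξ‖ := by
      unfold bF
      exact (Real.continuous_sqrt.measurable.comp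
        (((measurable_const.mul (measurable_norm.pow_const 2)).add
          (measurable_const.mul h2)).sub (measurable_norm.pow_const 4))).div
        measurable_const
    have h4 : Measurable fun ξ : E n =>
        Real.sqrt (‖ξ‖ ^ 2 + m ^ 2 * Real.log (1 + ‖ξ‖ ^ (2*θ))) :=
      Real.continuous_sqrt.measurable.comp
        ((measurable_norm.pow_const 2).add (measurable_const.mul h2))
    exact ((measurable_const.mul (Real.measurable_exp.comp
      ((measurable_norm.pow_const 2).neg.mul measurable_const))).mul
      (((h4.sub h3).div h3).pow_const 2))
  have hKGint : IntegrableOn (fun ξ => K * G ξ) S := (hgint.const_mul K).integrableOn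
  have hFint : IntegrableOn F S := by
    refine hKGint.mono' (hFmeas.aestronglyMeasurable.restrict) ?_
    filter_upwards [ae_restrict_mem hSmeas] with ξ hξ
    rw [Real.norm_eq_abs, abs_of_nonneg (hFnn ξ)]
    exact hpt ξ hξ
  have step1 : ∫ ξ in S, F ξ ≤ ∫ ξ in S, K * G ξ :=
    setIntegral_mono_on hFint hKGint hSmeas hpt
  have step2 : ∫ ξ in S, K * G ξ ≤ ∫ ξ, K * G ξ :=
    setIntegral_le_integral (hgint.const_mul K)
      (Filter.Eventually.of_forall fun ξ => by rw [hG, hK]; positivity)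
  have step3 : ∫ ξ : E n, K * G ξ = K * ((π/(t/2)) ^ ((n:ℝ)/2)) := by
    rw [integral_const_mul, hgval]
  have step4 : K * ((π/(t/2)) ^ ((n:ℝ)/2))
      = 1024 * (2*π) ^ ((n:ℝ)/2) * m⁻¹^2 * m⁻¹ ^ 2 * P₁ ^ 2 *
        t ^ (-((n : ℝ) + 4 - 4 * θ) / 2) := by
    have e4 : π/(t/2) = 2*π/t := by field_simp
    have e5 : ((2*π)/t) ^ ((n:ℝ)/2) = (2*π) ^ ((n:ℝ)/2) / t ^ ((n:ℝ)/2) :=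
      Real.div_rpow (by positivity) ht0.le _
    have e7 : t ^ (2*θ-2:ℝ) / t ^ ((n:ℝ)/2) = t ^ (-((n:ℝ)+4-4*θ)/2) := by
      rw [← Real.rpow_sub ht0]; congr 1; ring
    rw [e4, e5, ← e7, hK]
    have h1 : t ^ ((n:ℝ)/2) ≠ 0 := (Real.rpow_pos_of_pos ht0 _).ne'
    field_simp
  calc ∫ ξ in S, F ξ ≤ ∫ ξ in S, K * G ξ := step1
    _ ≤ ∫ ξ, K * G ξ := step2
    _ = K * ((π/(t/2)) ^ ((n:ℝ)/2)) := step3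
    _ = _ := step4

end
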